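/- arXiv:1404.3462 — 2 statements merged into one kernel-verified Lean document; each statement's English description precedes it below -/
import Mathlib

section
/- The class of elementary amenable groups is the smallest class of groups containing the trivial group and closed under taking direct limits (directed unions) and under extensions 1 → N → G → Q → 1 where Q is either finite or infinite cyclic. -/
universe u

/-- A class of groups (in universe `u`) is *isomorphism closed* if it is invariant
under group isomorphism. -/
def IsoClosed (P : ∀ (G : Type u) [Group G], Prop) : Prop :=
  ∀ (G H : Type u) [Group G] [Group H], (G ≃* H) → P G → P H

/-- A class of groups is closed under (internal) directed unions: if a group `G` is the
directed union of a family of subgroups each belonging to the class, then `G` belongs to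
the class. -/
def ClosedUnderDirectedUnions (P : ∀ (G : Type u) [Group G], Prop) : Prop :=
  ∀ (G : Type u) [Group G] (ι : Type u) (K : ι → Subgroup G),
    Nonempty ι → Directed (· ≤ ·) K → (⨆ i, K i) = ⊤ → (∀ i, P (K i)) → P G

open Subgroup Function

def FinZ (Q : Type u) [Group Q] : Prop := Finite Q ∨ Nonempty (Q ≃* Multiplicative ℤ)

def CO (G : Type u) [Group G] : Prop :=
  ∀ P : ∀ (G : Type u) [Group G], Prop,
    IsoClosed P →
    (∀ (H : Type u) [Group H], Subsingleton H → P H) →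
    ClosedUnderDirectedUnions P →
    (∀ (H : Type u) [Group H] (N : Subgroup H) [N.Normal], P N → FinZ (H ⧸ N) → P H) →
    P G

lemma co_iso {A B : Type u} [Group A] [Group B] (e : A ≃* B) (h : CO A) : CO B :=
  fun P h1 h2 h3 h4 => h1 A B e (h P h1 h2 h3 h4)

lemma co_triv (H : Type u) [Group H] [Subsingleton H] : CO H :=
  fun _ _ h2 _ _ => h2 H ‹_›

lemma co_ext (H : Type u) [Group H] (N : Subgroup H) [N.Normal] (hN : CO N)
    (hq : FinZ (H ⧸ N)) : CO H :=
  fun P h1 h2 h3 h4 => h4 H N (hN P h1 h2 h3 h4) hq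

lemma co_union (G : Type u) [Group G] (ι : Type u) (K : ι → Subgroup G) (hne : Nonempty ι)
    (hdir : Directed (· ≤ ·) K) (htop : (⨆ i, K i) = ⊤) (h : ∀ i, CO (K i)) : CO G :=
  fun P h1 h2 h3 h4 => h3 G ι K hne hdir htop (fun i => h i P h1 h2 h3 h4)

lemma co_fin (H : Type u) [Group H] (hH : Finite H) : CO H := by
  have : Finite (H ⧸ (⊥ : Subgroup H)) := Finite.of_surjective _ (QuotientGroup.mk'_surjective ⊥)
  exact co_ext H ⊥ (co_triv _) (Or.inl this)

lemma comap_quot_equiv {H Q : Type u} [Group H] [Group Q] (f : H →* Q) (hf : Surjective f)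
    (R : Subgroup Q) :
    Nonempty ((↥(R.comap f)) ⧸ (f.ker.subgroupOf (R.comap f)) ≃* ↥R) := by
  have e := (QuotientGroup.quotientMulEquivOfEq (f.ker_restrict (K := R.comap f)).symm).trans <|
    (QuotientGroup.quotientKerEquivRange (f.domRestrict (R.comap f))).trans <|
    MulEquiv.subgroupCongr (f.restrict_range (K := R.comap f))
  exact ⟨e.trans (MulEquiv.subgroupCongr (map_comap_eq_self_of_surjective hf R))⟩

lemma quot_quot_equiv {H Q : Type u} [Group H] [Group Q] (f : H →* Q) (hf : Surjective f)
    (R : Subgroup Q) [R.Normal] :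
    Nonempty ((H ⧸ (R.comap f)) ≃* (Q ⧸ R)) := by
  have hker : ((QuotientGroup.mk' R).comp f).ker = R.comap f := by
    rw [← MonoidHom.comap_ker, QuotientGroup.ker_mk']
  have hs : Surjective ((QuotientGroup.mk' R).comp f) := (QuotientGroup.mk'_surjective R).comp hf
  exact ⟨(QuotientGroup.quotientMulEquivOfEq hker.symm).trans
    (QuotientGroup.quotientKerEquivOfSurjective _ hs)⟩

lemma finZ_of_isCyclic (Q : Type u) [Group Q] [IsCyclic Q] : FinZ Q := by
  by_cases h : Finite Q
  · exact Or.inl h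
  · have : Infinite Q := not_finite_iff_infinite.mp h
    obtain ⟨g, hg⟩ := IsCyclic.exists_generator (α := Q)
    have hord : ¬ IsOfFinOrder g := by
      rw [← orderOf_eq_zero_iff]
      exact Infinite.orderOf_eq_zero_of_forall_mem_zpowers hg
    refine Or.inr ⟨(MulEquiv.ofBijective (zpowersHom Q g) ⟨?_, ?_⟩).symm⟩
    · intro a b hab
      exact injective_zpow_iff_not_isOfFinOrder.mpr hord hab
    · intro x
      obtain ⟨k, hk⟩ := mem_zpowers_iff.mp (hg x)
      exact ⟨Multiplicative.ofAdd k, hk⟩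

lemma finZ_iso {A B : Type u} [Group A] [Group B] (e : A ≃* B) (h : FinZ A) : FinZ B := by
  rcases h with h | f
  · exact Or.inl (Finite.of_equiv A e.toEquiv)
  · obtain ⟨f⟩ := f
    exact Or.inr ⟨e.symm.trans f⟩

lemma finZ_subgroup {A : Type u} [Group A] (h : FinZ A) (K : Subgroup A) : FinZ ↥K := by
  rcases h with h | f
  · exact Or.inl (by haveI := h; infer_instance)
  · obtain ⟨e⟩ := f
    haveI : IsCyclic A := isCyclic_of_surjective e.symm.toMonoidHom e.symm.surjective
    exact finZ_of_isCyclic ↥K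

lemma finZ_surjective {A B : Type u} [Group A] [Group B] (f : A →* B) (hf : Surjective f)
    (h : FinZ A) : FinZ B := by
  rcases h with h | hf2
  · exact Or.inl (Finite.of_surjective f hf)
  · obtain ⟨e⟩ := hf2
    haveI : IsCyclic A := isCyclic_of_surjective e.symm.toMonoidHom e.symm.surjective
    haveI : IsCyclic B := isCyclic_of_surjective f hf
    exact finZ_of_isCyclic B

lemma subgroupOf_comm {G : Type u} [Group G] (A B : Subgroup G) :
    Nonempty (↥(A.subgroupOf B) ≃* ↥(B.subgroupOf A)) :=
  ⟨(MulEquiv.subgroupCongr (inf_subgroupOf_right A B).symm).trans <|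
    (subgroupOfEquivOfLe inf_le_right).trans <|
    (MulEquiv.subgroupCongr (inf_comm A B)).trans <|
    (subgroupOfEquivOfLe inf_le_right).symm.trans <|
    MulEquiv.subgroupCongr (inf_subgroupOf_right B A)⟩

lemma map_equiv_quot {G Q : Type u} [Group G] [Group Q] (f : G →* Q) (K : Subgroup G) :
    Nonempty ((↥K ⧸ (f.ker.subgroupOf K)) ≃* ↥(K.map f)) :=
  ⟨(QuotientGroup.quotientMulEquivOfEq (f.ker_restrict (K := K)).symm).trans <|
    (QuotientGroup.quotientKerEquivRange (f.domRestrict K)).trans <|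
    MulEquiv.subgroupCongr (f.restrict_range (K := K))⟩

lemma co_closure_finset {H : Type u} [CommGroup H] (S : Finset H) :
    CO ↥(Subgroup.closure (S : Set H)) := by
  classical
  induction S using Finset.induction_on with
  | empty =>
      have : Subsingleton ↥(Subgroup.closure ((∅ : Finset H) : Set H)) := by
        rw [Finset.coe_empty, Subgroup.closure_empty]
        infer_instance
      exact co_triv _
  | @insert a S ha ih =>
      rw [Finset.coe_insert]
      set T := (S : Set H) with hT
      have hle : Subgroup.closure T ≤ Subgroup.closure (insert a T) :=
        Subgroup.closure_mono (Set.subset_insert a T)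
      set K' := Subgroup.closure (insert a T) with hK'
      set N := (Subgroup.closure T).subgroupOf K' with hN
      have hNco : CO ↥N := co_iso (subgroupOfEquivOfLe hle).symm ih
      have haK : a ∈ K' := Subgroup.subset_closure (Set.mem_insert a T)
      have hcyc : IsCyclic (↥K' ⧸ N) := by
        refine ⟨⟨QuotientGroup.mk ⟨a, haK⟩, ?_⟩⟩
        intro x
        refine QuotientGroup.induction_on x ?_
        intro z
        have hy : (z : H) ∈ Subgroup.closure {a} ⊔ Subgroup.closure T := by
          rw [← Subgroup.closure_union, Set.singleton_union]
          exact z.2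
        rw [Subgroup.mem_sup] at hy
        obtain ⟨y, hy1, s, hs, hys⟩ := hy
        rw [← Subgroup.zpowers_eq_closure, Subgroup.mem_zpowers_iff] at hy1
        obtain ⟨k, rfl⟩ := hy1
        have hsK : s ∈ K' := hle hs
        have hz : z = (⟨a, haK⟩ : ↥K') ^ k * ⟨s, hsK⟩ := by
          apply Subtype.ext
          push_cast
          exact hys.symm
        have hs1 : (QuotientGroup.mk (⟨s, hsK⟩ : ↥K') : ↥K' ⧸ N) = 1 := by
          rw [QuotientGroup.eq_one_iff]
          exact hs
        refine ⟨k, ?_⟩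
        show (QuotientGroup.mk (⟨a, haK⟩ : ↥K') : ↥K' ⧸ N) ^ k = QuotientGroup.mk z
        rw [hz, QuotientGroup.mk_mul, QuotientGroup.mk_zpow, hs1, mul_one]
      exact co_ext _ N hNco (finZ_of_isCyclic _)

lemma co_abelian (H : Type u) [Group H] (hc : ∀ a b : H, a * b = b * a) : CO H := by
  classical
  letI : CommGroup H := { ‹Group H› with mul_comm := hc }
  apply co_union H (Finset H) (fun S => Subgroup.closure (S : Set H)) ⟨∅⟩
  · intro S T
    exact ⟨S ∪ T, Subgroup.closure_mono (by simp), Subgroup.closure_mono (by simp)⟩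
  · rw [eq_top_iff]
    intro x _
    have hx : x ∈ Subgroup.closure (({x} : Finset H) : Set H) :=
      Subgroup.subset_closure (by simp)
    exact (le_iSup (fun S : Finset H => Subgroup.closure (S : Set H)) {x}) hx
  · intro S
    exact co_closure_finset S

def COplus (H : Type u) [Group H] : Prop :=
  CO H ∧ (∀ K : Subgroup H, CO ↥K) ∧ (∀ (N : Subgroup H) [N.Normal], CO (H ⧸ N))

lemma coplus_iso : IsoClosed COplus := by
  rintro A B _ _ e ⟨h1, h2, h3⟩
  refine ⟨co_iso e h1, ?_, ?_⟩
  · intro K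
    exact co_iso (e.symm.subgroupMap K).symm (h2 (K.map e.symm.toMonoidHom))
  · intro N _
    obtain ⟨f⟩ := quot_quot_equiv e.toMonoidHom e.surjective N
    exact co_iso f (h3 (N.comap e.toMonoidHom))

lemma coplus_triv (H : Type u) [Group H] (hs : Subsingleton H) : COplus H := by
  refine ⟨co_triv H, ?_, ?_⟩
  · intro K
    haveI : Subsingleton ↥K := ⟨fun a b => Subtype.ext (Subsingleton.elim _ _)⟩
    exact co_triv _
  · intro N _
    haveI : Subsingleton (H ⧸ N) := by
      constructor
      intro a b
      refine QuotientGroup.induction_on a ?_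
      intro x
      refine QuotientGroup.induction_on b ?_
      intro y
      exact congrArg _ (Subsingleton.elim x y)
    exact co_triv _

lemma coplus_union : ClosedUnderDirectedUnions COplus := by
  intro G _ ι K hne hdir htop hco
  haveI := hne
  refine ⟨co_union G ι K hne hdir htop (fun i => (hco i).1), ?_, ?_⟩
  · intro L
    apply co_union ↥L ι (fun i => (K i).subgroupOf L) hne
    · intro i j
      obtain ⟨k, h1, h2⟩ := hdir i j
      exact ⟨k, Subgroup.comap_mono h1, Subgroup.comap_mono h2⟩
    · rw [eq_top_iff]
      rintro x -
      have hx : (x : G) ∈ ⨆ i, K i := by rw [htop]; trivial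
      obtain ⟨i, hi⟩ := (Subgroup.mem_iSup_of_directed hdir).mp hx
      exact le_iSup (fun i => (K i).subgroupOf L) i (Subgroup.mem_subgroupOf.mpr hi)
    · intro i
      obtain ⟨f⟩ := subgroupOf_comm (K i) L
      exact co_iso f.symm ((hco i).2.1 (L.subgroupOf (K i)))
  · intro N _
    apply co_union (G ⧸ N) ι (fun i => (K i).map (QuotientGroup.mk' N)) hne
    · intro i j
      obtain ⟨k, h1, h2⟩ := hdir i j
      exact ⟨k, Subgroup.map_mono h1, Subgroup.map_mono h2⟩
    · rw [eq_top_iff]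
      rintro q -
      refine QuotientGroup.induction_on q ?_
      intro x
      have hx : x ∈ ⨆ i, K i := by rw [htop]; trivial
      obtain ⟨i, hi⟩ := (Subgroup.mem_iSup_of_directed hdir).mp hx
      exact le_iSup (fun i => (K i).map (QuotientGroup.mk' N)) i
        (Subgroup.mem_map.mpr ⟨x, hi, rfl⟩)
    · intro i
      obtain ⟨f⟩ := map_equiv_quot (QuotientGroup.mk' N) (K i)
      exact co_iso f ((hco i).2.2 ((QuotientGroup.mk' N).ker.subgroupOf (K i)))

lemma coplus_ext (H : Type u) [Group H] (N : Subgroup H) [N.Normal]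
    (hN : COplus ↥N) (hq : FinZ (H ⧸ N)) : COplus H := by
  obtain ⟨hN1, hN2, hN3⟩ := hN
  have hker : (QuotientGroup.mk' N).ker = N := QuotientGroup.ker_mk' N
  refine ⟨co_ext H N hN1 hq, ?_, ?_⟩
  · intro L
    refine co_ext ↥L ((QuotientGroup.mk' N).ker.subgroupOf L) ?_ ?_
    · rw [hker]
      obtain ⟨f⟩ := subgroupOf_comm N L
      exact co_iso f.symm (hN2 (L.subgroupOf N))
    · obtain ⟨f⟩ := map_equiv_quot (QuotientGroup.mk' N) L
      exact finZ_iso f.symm (finZ_subgroup hq _)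
  · intro M _
    set N' : Subgroup (H ⧸ M) := N.map (QuotientGroup.mk' M) with hN'
    haveI : N'.Normal := Subgroup.Normal.map ‹N.Normal› _ (QuotientGroup.mk'_surjective M)
    have hco : CO ↥N' := by
      obtain ⟨f⟩ := map_equiv_quot (QuotientGroup.mk' M) N
      exact co_iso f (hN3 ((QuotientGroup.mk' M).ker.subgroupOf N))
    have hle : N ≤ ((QuotientGroup.mk' N').comp (QuotientGroup.mk' M)).ker := by
      intro x hx
      have : QuotientGroup.mk' M x ∈ N' := Subgroup.mem_map.mpr ⟨x, hx, rfl⟩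
      simpa [MonoidHom.mem_ker, QuotientGroup.eq_one_iff] using this
    set φ : (H ⧸ N) →* ((H ⧸ M) ⧸ N') := QuotientGroup.lift N _ hle with hφ
    have hsurj : Function.Surjective φ := by
      intro q
      obtain ⟨y, rfl⟩ := QuotientGroup.mk'_surjective N' q
      obtain ⟨x, rfl⟩ := QuotientGroup.mk'_surjective M y
      exact ⟨QuotientGroup.mk x, rfl⟩
    exact co_ext _ N' hco (finZ_surjective φ hsurj hq)

lemma co_coplus {H : Type u} [Group H] (h : CO H) : COplus H :=
  h COplus coplus_iso coplus_triv coplus_union (fun H _ N _ hN hq => coplus_ext H N hN hq)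

def EClass (Q : Type u) [Group Q] : Prop :=
  ∀ (H : Type u) [Group H] (N : Subgroup H) [N.Normal], CO ↥N → ((H ⧸ N) ≃* Q) → CO H

lemma ker_lift_eq {H Q : Type u} [Group H] [Group Q] (N : Subgroup H) [N.Normal]
    (f : (H ⧸ N) ≃* Q) : (f.toMonoidHom.comp (QuotientGroup.mk' N)).ker = N := by
  ext x
  rw [MonoidHom.mem_ker, MonoidHom.comp_apply]
  rw [show f.toMonoidHom (QuotientGroup.mk' N x) = f (QuotientGroup.mk' N x) from rfl]
  rw [MulEquiv.map_eq_one_iff]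
  exact QuotientGroup.eq_one_iff x

lemma eclass_comap {H Q : Type u} [Group H] [Group Q] (π : H →* Q) (hπ : Function.Surjective π)
    (hkerco : CO ↥π.ker) (R : Subgroup Q) (hER : EClass ↥R) : CO ↥(R.comap π) := by
  have hle : π.ker ≤ R.comap π := by
    intro x hx
    rw [Subgroup.mem_comap, MonoidHom.mem_ker.mp hx]
    exact R.one_mem
  obtain ⟨g⟩ := comap_quot_equiv π hπ R
  exact hER ↥(R.comap π) (π.ker.subgroupOf (R.comap π))
    (co_iso (subgroupOfEquivOfLe hle).symm hkerco) g

lemma e_iso : IsoClosed EClass := by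
  intro Q Q' _ _ e hE H _ N _ hN f
  exact hE H N hN (f.trans e.symm)

lemma e_triv (Q : Type u) [Group Q] (hs : Subsingleton Q) : EClass Q := by
  intro H _ N _ hN f
  haveI : Subsingleton (H ⧸ N) := f.toEquiv.subsingleton
  have hNt : N = ⊤ := (Subgroup.eq_top_iff' N).mpr
    (fun x => (QuotientGroup.eq_one_iff x).mp (Subsingleton.elim _ _))
  rw [hNt] at hN
  exact co_iso Subgroup.topEquiv hN

lemma e_union : ClosedUnderDirectedUnions EClass := by
  intro Q _ ι K hne hdir htop hE H _ N _ hN f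
  haveI := hne
  set π : H →* Q := f.toMonoidHom.comp (QuotientGroup.mk' N) with hπdef
  have hπ : Function.Surjective π := f.surjective.comp (QuotientGroup.mk'_surjective N)
  have hker : π.ker = N := ker_lift_eq N f
  have hkerco : CO ↥π.ker := co_iso (MulEquiv.subgroupCongr hker.symm) hN
  apply co_union H ι (fun i => (K i).comap π) hne
  · intro i j
    obtain ⟨k, h1, h2⟩ := hdir i j
    exact ⟨k, Subgroup.comap_mono h1, Subgroup.comap_mono h2⟩
  · rw [eq_top_iff]
    rintro x -
    have hx : π x ∈ ⨆ i, K i := by rw [htop]; trivial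
    obtain ⟨i, hi⟩ := (Subgroup.mem_iSup_of_directed hdir).mp hx
    exact le_iSup (fun i => (K i).comap π) i (Subgroup.mem_comap.mpr hi)
  · intro i
    exact eclass_comap π hπ hkerco (K i) (hE i)

lemma e_ext (Q : Type u) [Group Q] (R : Subgroup Q) [R.Normal]
    (hER : EClass ↥R) (hq : FinZ (Q ⧸ R)) : EClass Q := by
  intro H _ N _ hN f
  set π : H →* Q := f.toMonoidHom.comp (QuotientGroup.mk' N) with hπdef
  have hπ : Function.Surjective π := f.surjective.comp (QuotientGroup.mk'_surjective N)
  have hker : π.ker = N := ker_lift_eq N f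
  have hkerco : CO ↥π.ker := co_iso (MulEquiv.subgroupCongr hker.symm) hN
  have hM : CO ↥(R.comap π) := eclass_comap π hπ hkerco R hER
  obtain ⟨g⟩ := quot_quot_equiv π hπ R
  exact co_ext H (R.comap π) hM (finZ_iso g.symm hq)

lemma co_ext_full (H : Type u) [Group H] (N : Subgroup H) [N.Normal]
    (hN : CO ↥N) (hQ : CO (H ⧸ N)) : CO H :=
  hQ EClass e_iso e_triv e_union (fun Q _ R _ hER hq => e_ext Q R hER hq) H N hN (MulEquiv.refl _)

/-- A group `G` is *elementary amenable* if it belongs to every isomorphism-closed class of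
groups which contains all finite groups and all abelian groups and is closed under taking
subgroups, quotients, directed unions, and extensions.  (That is, `G` lies in the smallest
such class.) -/
def ElementaryAmenable (G : Type u) [Group G] : Prop :=
  ∀ P : ∀ (G : Type u) [Group G], Prop,
    IsoClosed P →
    (∀ (H : Type u) [Group H], Finite H → P H) →
    (∀ (H : Type u) [Group H], (∀ a b : H, a * b = b * a) → P H) →
    (∀ (H : Type u) [Group H] (K : Subgroup H), P H → P K) →
    (∀ (H : Type u) [Group H] (N : Subgroup H) [N.Normal], P H → P (H ⧸ N)) →
    ClosedUnderDirectedUnions P →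
    (∀ (H : Type u) [Group H] (N : Subgroup H) [N.Normal], P N → P (H ⧸ N) → P H) →
    P G

/-- **Chou–Osin.** The class of elementary amenable groups is the smallest
(isomorphism-closed) class of groups containing the trivial group and closed under directed
unions and under extensions `1 → N → G → Q → 1` with `Q` finite or infinite cyclic. -/
theorem elementaryAmenable_iff_chou_osin (G : Type u) [Group G] :
    ElementaryAmenable G ↔
      ∀ P : ∀ (G : Type u) [Group G], Prop,
        IsoClosed P →
        (∀ (H : Type u) [Group H], Subsingleton H → P H) →
        ClosedUnderDirectedUnions P →
        (∀ (H : Type u) [Group H] (N : Subgroup H) [N.Normal],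
          P N → (Finite (H ⧸ N) ∨ Nonempty ((H ⧸ N) ≃* Multiplicative ℤ)) → P H) →
        P G := by
  constructor
  · intro hEA P h1 h2 h3 h4
    have hco : CO G := hEA CO
      (fun A B _ _ e h => co_iso e h)
      (fun H _ h => co_fin H h)
      (fun H _ h => co_abelian H h)
      (fun H _ K h => (co_coplus h).2.1 K)
      (fun H _ N _ h => (co_coplus h).2.2 N)
      (fun G' _ ι K hne hdir htop h => co_union G' ι K hne hdir htop h)
      (fun H _ N _ hN hq => co_ext_full H N hN hq)
    exact hco P h1 h2 h3 (fun H _ N _ hN hq => h4 H N hN hq)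
  · intro h P hiso hfin hab hsub hquot hun hext
    apply h P hiso
    · intro H _ hs
      haveI := hs
      exact hfin H Finite.of_subsingleton
    · exact hun
    · intro H _ N _ hN hq
      refine hext H N hN ?_
      rcases hq with hF | he
      · exact hfin _ hF
      · obtain ⟨e⟩ := he
        exact hab (H ⧸ N) (fun a b => e.injective (by rw [map_mul, map_mul, mul_comm]))
end

section
/- No infinite finitely generated simple group is elementary amenable. -/
universe u

/-- `NoBadQuot H` : no subgroup of `H` admits a surjective homomorphism onto an
infinite finitely generated simple group. -/
def NoBadQuot (H : Type u) [Group H] : Prop :=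
  ∀ (A : Subgroup H) (S : Type u) [Group S] (f : A →* S), Function.Surjective f →
    ¬ (Infinite S ∧ Group.FG S ∧ IsSimpleGroup S)

lemma noBadQuot_of_surjective {H H' : Type u} [Group H] [Group H'] (g : H →* H')
    (hg : Function.Surjective g) (hP : NoBadQuot H) : NoBadQuot H' := by
  intro A S _ f hf hbad
  have hmap : (A.comap g).map g = A := Subgroup.map_comap_eq_self_of_surjective hg A
  let q := g.subgroupMap (A.comap g)
  have hq : Function.Surjective q := g.subgroupMap_surjective (A.comap g)
  let e : ((A.comap g).map g) ≃* A := MulEquiv.subgroupCongr hmap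
  exact hP (A.comap g) S (f.comp (e.toMonoidHom.comp q))
    (hf.comp (e.surjective.comp hq)) hbad

lemma noBadQuot_subgroup {H : Type u} [Group H] (K : Subgroup H)
    (hP : NoBadQuot H) : NoBadQuot K := by
  intro A S _ f hf hbad
  let e : A ≃* A.map K.subtype := A.equivMapOfInjective K.subtype K.subtype_injective
  exact hP (A.map K.subtype) S (f.comp e.symm.toMonoidHom)
    (hf.comp e.symm.surjective) hbad

/-- No infinite finitely generated simple group is elementary amenable. -/
theorem not_elementaryAmenable_of_infinite_fg_simple (G : Type u) [Group G]
    [Infinite G] (hfg : Group.FG G) (hs : IsSimpleGroup G) :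
    ¬ ElementaryAmenable G := by
  intro hG
  have hPG : NoBadQuot G := by
    refine hG NoBadQuot ?_ ?_ ?_ ?_ ?_ ?_ ?_
    · -- iso closed
      intro G H _ _ e hP
      exact noBadQuot_of_surjective e.toMonoidHom e.surjective hP
    · -- finite
      intro H _ hfin A S _ f hf hbad
      obtain ⟨hinf, -, -⟩ := hbad
      haveI := hinf
      haveI : Finite S := Finite.of_surjective f hf
      exact not_finite S
    · -- abelian
      intro H _ hcomm A S _ f hf hbad
      obtain ⟨hinf, -, hsimp⟩ := hbad
      letI : CommGroup S :=
        { (inferInstance : Group S) with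
          mul_comm := by
            intro a b
            obtain ⟨x, rfl⟩ := hf a
            obtain ⟨y, rfl⟩ := hf b
            rw [← map_mul, ← map_mul]
            congr 1
            exact Subtype.ext (hcomm _ _) }
      haveI := hsimp
      haveI := hinf
      obtain ⟨g, hg⟩ := IsCyclic.exists_generator (α := S)
      have hford : ¬ IsOfFinOrder g := by
        intro h
        have huniv : (Set.univ : Set S).Finite :=
          h.finite_zpowers.subset (fun x _ => hg x)
        haveI : Finite S := Set.finite_univ_iff.mp huniv
        exact not_finite S
      rcases (Subgroup.zpowers (g * g)).normal_of_comm.eq_bot_or_eq_top with hbot | htop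
      · have h1 : g * g ∈ Subgroup.zpowers (g * g) := Subgroup.mem_zpowers _
        rw [hbot, Subgroup.mem_bot] at h1
        exact hford (isOfFinOrder_iff_pow_eq_one.mpr ⟨2, two_pos, by rw [pow_two]; exact h1⟩)
      · have h1 : g ∈ Subgroup.zpowers (g * g) := htop ▸ Subgroup.mem_top g
        obtain ⟨k, hk⟩ := h1
        have h2 : g ^ (2 * k) = g := by
          rw [zpow_mul, zpow_two]; exact hk
        have h3 : g ^ (2 * k - 1) = 1 := by
          rw [zpow_sub, h2, zpow_one, mul_inv_cancel]
        exact hford (isOfFinOrder_iff_zpow_eq_one.mpr ⟨2 * k - 1, by omega, h3⟩)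
    · -- subgroups
      intro H _ K hP
      exact noBadQuot_subgroup K hP
    · -- quotients
      intro H _ N _ hP
      exact noBadQuot_of_surjective (QuotientGroup.mk' N)
        (QuotientGroup.mk'_surjective N) hP
    · -- directed unions
      intro G _ ι K hne hdir hsup hPi A S _ f hf hbad
      obtain ⟨hinf, hSfg, hsimp⟩ := hbad
      obtain ⟨T, hTtop, hTfin⟩ := Group.fg_iff.mp hSfg
      -- choose preimages of the generators
      have hchoose : ∀ s : T, ∃ a : A, f a = s := fun s => hf s
      choose a ha using hchoose
      haveI : Finite T := hTfin
      let U : Set G := Set.range fun s : T => ((a s : A) : G)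
      have hUfin : U.Finite := Set.finite_range _
      -- U is contained in some K i
      have hmem : ∀ u ∈ U, ∃ i, u ∈ K i := by
        intro u _
        have : u ∈ ⨆ i, K i := hsup ▸ Subgroup.mem_top u
        exact (Subgroup.mem_iSup_of_directed hdir).mp this
      have hmem' : ∀ u ∈ hUfin.toFinset, ∃ i, u ∈ K i := fun u hu =>
        hmem u (hUfin.mem_toFinset.mp hu)
      choose j hj using hmem'
      haveI := hne
      classical
      let idx : Finset ι := hUfin.toFinset.attach.image fun u => j u.1 u.2
      obtain ⟨i, hi⟩ := hdir.finset_le idx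
      have hU : U ⊆ (K i : Set G) := by
        intro u hu
        have hji : K (j u (hUfin.mem_toFinset.mpr hu)) ≤ K i :=
          hi _ (Finset.mem_image_of_mem _ (Finset.mem_attach _ ⟨u, hUfin.mem_toFinset.mpr hu⟩) :
            j u (hUfin.mem_toFinset.mpr hu) ∈ idx)
        exact hji (hj u (hUfin.mem_toFinset.mpr hu))
      have hUA : U ⊆ (A : Set G) := by
        rintro u ⟨s, rfl⟩
        exact (a s).2
      set A₀ : Subgroup G := Subgroup.closure U with hA₀def
      have hA₀A : A₀ ≤ A := (Subgroup.closure_le A).mpr hUA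
      have hA₀K : A₀ ≤ K i := (Subgroup.closure_le _).mpr hU
      let φ₁ : A₀ →* S := f.comp (Subgroup.inclusion hA₀A)
      have hφ₁ : Function.Surjective φ₁ := by
        rw [← MonoidHom.range_eq_top]
        rw [← top_le_iff, ← hTtop]
        refine (Subgroup.closure_le _).mpr ?_
        intro s hsT
        refine ⟨⟨(a ⟨s, hsT⟩ : A), Subgroup.subset_closure (Set.mem_range_self _)⟩, ?_⟩
        show f _ = s
        exact (congrArg f (Subtype.ext rfl)).trans (ha ⟨s, hsT⟩)
      let e := Subgroup.subgroupOfEquivOfLe hA₀K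
      exact hPi i (A₀.subgroupOf (K i)) S (φ₁.comp e.toMonoidHom)
        (hφ₁.comp e.surjective) ⟨hinf, hSfg, hsimp⟩
    · -- extensions
      intro H _ N _ hPN hPQ A S _ f hf hbad
      obtain ⟨hinf, hSfg, hsimp⟩ := hbad
      haveI := hsimp
      let M : Subgroup S := (N.subgroupOf A).map f
      have hMn : M.Normal := Subgroup.Normal.map inferInstance f hf
      rcases hMn.eq_bot_or_eq_top with hM | hM
      · -- image trivial : S is a quotient of a subgroup of H ⧸ N
        let q := (QuotientGroup.mk' N).subgroupMap A
        have hq : Function.Surjective q := (QuotientGroup.mk' N).subgroupMap_surjective A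
        have hker : ∀ x ∈ q.ker, f x = 1 := by
          intro x hx
          have h1 : ((q x : H ⧸ N) : H ⧸ N) = 1 := by
            rw [hx]; rfl
          have h2 : ((x : H) : H ⧸ N) = 1 := h1
          have h3 : (x : H) ∈ N := (QuotientGroup.eq_one_iff _).mp h2
          have h4 : f x ∈ M := ⟨x, h3, rfl⟩
          rw [hM] at h4
          exact h4
        let lift : (A ⧸ q.ker) →* S := QuotientGroup.lift q.ker f hker
        let e : (A ⧸ q.ker) ≃* A.map (QuotientGroup.mk' N) :=
          QuotientGroup.quotientKerEquivOfSurjective q hq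
        have hliftsurj : Function.Surjective lift := by
          intro s
          obtain ⟨x, rfl⟩ := hf s
          exact ⟨QuotientGroup.mk x, rfl⟩
        exact hPQ (A.map (QuotientGroup.mk' N)) S (lift.comp e.symm.toMonoidHom)
          (hliftsurj.comp e.symm.surjective) ⟨hinf, hSfg, hsimp⟩
      · -- image full : S is a quotient of a subgroup of N
        let ψ : (A.subgroupOf N) →* A :=
          ((N.subtype.domRestrict (A.subgroupOf N)).codRestrict A (fun x => x.2))
        have hsurj : Function.Surjective (f.comp ψ) := by
          intro s
          have hs : s ∈ M := hM ▸ Subgroup.mem_top s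
          obtain ⟨y, hyN, rfl⟩ := hs
          refine ⟨⟨⟨(y : H), hyN⟩, y.2⟩, ?_⟩
          show f _ = f y
          exact congrArg f (Subtype.ext rfl)
        exact hPN (A.subgroupOf N) S (f.comp ψ) hsurj ⟨hinf, hSfg, hsimp⟩
  -- contradiction: G itself is a bad quotient of ⊤ ≤ G
  exact hPG ⊤ G (⊤ : Subgroup G).subtype (fun g => ⟨⟨g, trivial⟩, rfl⟩)
    ⟨‹Infinite G›, hfg, hs⟩
end
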